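/- Let Δx > 0, let x_i ∈ ℝ, x_{i+1} = x_i + Δx, and x_{i+1/2} = x_i + Δx/2. Let f, g : ℝ → ℝ be three times continuously differentiable with |f'''(x)| ≤ M and |g'''(x)| ≤ M for all x ∈ [x_i, x_{i+1}]. Let x₀ ∈ (x_{i+1/2}, x_{i+1}], define the piecewise function ψ(x) = f(x) for x < x₀ and ψ(x) = g(x) for x ≥ x₀, set d⁺ = x_{i+1} − x₀, and for m = 0, 1, 2 let ⟦ψ^(m)⟧ = g^(m)(x₀) − f^(m)(x₀) denote the jumps in ψ and its derivatives at x₀. Then the jump-corrected two-point finite difference satisfies | f'(x_{i+1/2}) − [ (ψ(x_{i+1}) − ψ(x_i))/Δx − (1/Δx) Σ_{m=0}^{2} (d⁺)^m/m! · ⟦ψ^(m)⟧ ] | ≤ M·Δx². In other words, correcting the standard two-point difference by the truncated generalized Taylor series of the jumps recovers the one-sided derivative of the smooth piece f at the staggered evaluation point to second-order accuracy in Δx. -/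

import Mathlib

open Finset

lemma idw_eq_id {φ : ℝ → ℝ} {N : ℕ} (hφ : ContDiff ℝ N φ) {a b : ℝ} (hab : a < b)
    {m : ℕ} (hm : m ≤ N) : ∀ x ∈ Set.Icc a b,
    iteratedDerivWithin m φ (Set.Icc a b) x = iteratedDeriv m φ x := by
  induction m with
  | zero => simp
  | succ k ih =>
    intro x hx
    have hk := Nat.lt_of_succ_le hm
    have hdiff : DifferentiableAt ℝ (iteratedDeriv k φ) x :=
      (hφ.differentiable_iteratedDeriv k (by exact_mod_cast hk)) x
    rw [iteratedDerivWithin_succ,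
      derivWithin_congr (fun y hy => ih hk.le y hy) (ih hk.le x hx),
      hdiff.derivWithin ((uniqueDiffOn_Icc hab) x hx), iteratedDeriv_succ]

lemma my_taylor_bound (φ : ℝ → ℝ) (n : ℕ) (hφ : ContDiff ℝ ((n + 1 : ℕ) : ℕ∞) φ)
    (a b C : ℝ) (hab : a ≤ b)
    (hC : ∀ y ∈ Set.Icc a b, |iteratedDeriv (n + 1) φ y| ≤ C)
    (x : ℝ) (hx : x ∈ Set.Icc a b) :
    |φ x - ∑ m ∈ Finset.range (n + 1),
      (x - a) ^ m / (Nat.factorial m : ℝ) * iteratedDeriv m φ a| ≤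
      C * (x - a) ^ (n + 1) / (Nat.factorial n : ℝ) := by
  rcases eq_or_lt_of_le hab with rfl | hab'
  · have hx' : x = a := le_antisymm hx.2 hx.1
    subst hx'
    have hsum : ∑ m ∈ Finset.range (n + 1),
        (x - x) ^ m / (Nat.factorial m : ℝ) * iteratedDeriv m φ x = φ x := by
      rw [Finset.sum_eq_single_of_mem 0 (Finset.mem_range.mpr (Nat.succ_pos n))]
      · simp
      · intro m _ hm
        simp [sub_self, zero_pow hm]
    rw [hsum]
    simp
  · have key := taylor_mean_remainder_bound (f := φ) (a := a) (b := b) (C := C)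
      (x := x) (n := n) hab (hφ.contDiffOn) hx
      (fun y hy => by
        rw [Real.norm_eq_abs, idw_eq_id hφ hab' le_rfl y hy]
        exact hC y hy)
    rw [Real.norm_eq_abs] at key
    convert key using 3
    rw [taylor_within_apply]
    refine Finset.sum_congr rfl fun m hm => ?_
    rw [idw_eq_id hφ hab' ((Nat.lt_succ_iff.mp (Finset.mem_range.mp hm)).trans (Nat.le_succ n))
      a (Set.left_mem_Icc.mpr hab)]
    rw [smul_eq_mul]
    ring

set_option maxHeartbeats 1000000 in
/-- Jump-corrected two-point finite difference across an interface at `x₀`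
recovers the one-sided derivative of the smooth piece `f` at the staggered
point `x_{i+1/2}` to second order in `Δx`. -/
theorem corrected_first_difference_second_order
    (Δx : ℝ) (hΔx : 0 < Δx) (xi : ℝ) (M : ℝ)
    (f g : ℝ → ℝ) (hf : ContDiff ℝ 3 f) (hg : ContDiff ℝ 3 g)
    (hfM : ∀ x ∈ Set.Icc xi (xi + Δx), |iteratedDeriv 3 f x| ≤ M)
    (hgM : ∀ x ∈ Set.Icc xi (xi + Δx), |iteratedDeriv 3 g x| ≤ M)
    (x₀ : ℝ) (hx₀ : x₀ ∈ Set.Ioc (xi + Δx / 2) (xi + Δx))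
    (ψ : ℝ → ℝ) (hψ : ∀ x, ψ x = if x < x₀ then f x else g x)
    (dp : ℝ) (hdp : dp = (xi + Δx) - x₀)
    (jump : ℕ → ℝ)
    (hjump : ∀ m, jump m = iteratedDeriv m g x₀ - iteratedDeriv m f x₀) :
    |deriv f (xi + Δx / 2) -
        ((ψ (xi + Δx) - ψ xi) / Δx -
          (1 / Δx) * ∑ m ∈ Finset.range 3, dp ^ m / (Nat.factorial m : ℝ) * jump m)| ≤
      M * Δx ^ 2 := by
  obtain ⟨hx₀1, hx₀2⟩ := hx₀
  have hM0 : 0 ≤ M := le_trans (abs_nonneg _) (hfM xi ⟨le_rfl, by linarith⟩)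
  have hf3 : ContDiff ℝ ((2 + 1 : ℕ) : ℕ∞) f := by exact_mod_cast hf
  have hg3 : ContDiff ℝ ((2 + 1 : ℕ) : ℕ∞) g := by exact_mod_cast hg
  have hdf : ContDiff ℝ ((1 + 1 : ℕ) : ℕ∞) (deriv f) := by
    have h := (contDiff_succ_iff_deriv.mp (show ContDiff ℝ ((2 : ℕ) + 1) f by exact_mod_cast hf)).2.2
    exact_mod_cast h
  have hψ1 : ψ xi = f xi := by rw [hψ]; rw [if_pos (by linarith)]
  have hψ2 : ψ (xi + Δx) = g (xi + Δx) := by rw [hψ]; rw [if_neg (not_lt.mpr hx₀2)]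
  have hdp0 : 0 ≤ dp := by rw [hdp]; linarith
  have hdp2 : dp ≤ Δx / 2 := by rw [hdp]; linarith
  have hdp3 : dp ^ 3 ≤ (Δx / 2) ^ 3 := pow_le_pow_left₀ hdp0 hdp2 3
  -- Taylor bounds
  have hA := my_taylor_bound f 2 hf3 xi (xi + Δx) M (by linarith) hfM (xi + Δx)
    ⟨by linarith, le_rfl⟩
  have hB := my_taylor_bound (deriv f) 1 hdf xi (xi + Δx) M (by linarith)
    (fun y hy => by
      show |iteratedDeriv 2 (deriv f) y| ≤ M
      rw [← iteratedDeriv_succ']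
      exact hfM y hy)
    (xi + Δx / 2) ⟨by linarith, by linarith⟩
  have hF := my_taylor_bound f 2 hf3 x₀ (xi + Δx) M (by linarith)
    (fun y hy => hfM y ⟨by linarith [hy.1], hy.2⟩) (xi + Δx) ⟨by linarith, le_rfl⟩
  have hG := my_taylor_bound g 2 hg3 x₀ (xi + Δx) M (by linarith)
    (fun y hy => hgM y ⟨by linarith [hy.1], hy.2⟩) (xi + Δx) ⟨by linarith, le_rfl⟩
  have h21 : iteratedDeriv 1 (deriv f) xi = iteratedDeriv 2 f xi := by
    simp [iteratedDeriv_succ, iteratedDeriv_zero, iteratedDeriv_one]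
  have keyeq : deriv f (xi + Δx / 2) -
      ((ψ (xi + Δx) - ψ xi) / Δx -
        (1 / Δx) * ∑ m ∈ Finset.range 3, dp ^ m / (Nat.factorial m : ℝ) * jump m)
      = (deriv f (xi + Δx / 2) - ∑ m ∈ Finset.range (1 + 1),
          (xi + Δx / 2 - xi) ^ m / (Nat.factorial m : ℝ) * iteratedDeriv m (deriv f) xi)
        - ((f (xi + Δx) - ∑ m ∈ Finset.range (2 + 1),
              (xi + Δx - xi) ^ m / (Nat.factorial m : ℝ) * iteratedDeriv m f xi)
           + (g (xi + Δx) - ∑ m ∈ Finset.range (2 + 1),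
              (xi + Δx - x₀) ^ m / (Nat.factorial m : ℝ) * iteratedDeriv m g x₀)
           - (f (xi + Δx) - ∑ m ∈ Finset.range (2 + 1),
              (xi + Δx - x₀) ^ m / (Nat.factorial m : ℝ) * iteratedDeriv m f x₀)) / Δx := by
    simp only [Finset.sum_range_succ, Finset.sum_range_zero, iteratedDeriv_zero,
      iteratedDeriv_one, hψ1, hψ2, h21]
    simp only [hjump, hdp, iteratedDeriv_zero, iteratedDeriv_one, Nat.factorial]
    push_cast
    field_simp
    ring
  rw [keyeq]
  set B := deriv f (xi + Δx / 2) - ∑ m ∈ Finset.range (1 + 1),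
      (xi + Δx / 2 - xi) ^ m / (Nat.factorial m : ℝ) * iteratedDeriv m (deriv f) xi with hBdef
  set A := f (xi + Δx) - ∑ m ∈ Finset.range (2 + 1),
      (xi + Δx - xi) ^ m / (Nat.factorial m : ℝ) * iteratedDeriv m f xi with hAdef
  set Fr := f (xi + Δx) - ∑ m ∈ Finset.range (2 + 1),
      (xi + Δx - x₀) ^ m / (Nat.factorial m : ℝ) * iteratedDeriv m f x₀ with hFdef
  set Gr := g (xi + Δx) - ∑ m ∈ Finset.range (2 + 1),
      (xi + Δx - x₀) ^ m / (Nat.factorial m : ℝ) * iteratedDeriv m g x₀ with hGdef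
  have hA' : |A| ≤ M * Δx ^ 3 / 2 := le_trans hA (le_of_eq (by norm_num [Nat.factorial]; try ring_nf))
  have hB' : |B| ≤ M * (Δx / 2) ^ 2 := le_trans hB (le_of_eq (by norm_num [Nat.factorial]; try ring_nf))
  have hF' : |Fr| ≤ M * dp ^ 3 / 2 := le_trans hF (le_of_eq (by rw [hdp]; norm_num [Nat.factorial]; try ring_nf))
  have hG' : |Gr| ≤ M * dp ^ 3 / 2 := le_trans hG (le_of_eq (by rw [hdp]; norm_num [Nat.factorial]; try ring_nf))
  calc |B - (A + Gr - Fr) / Δx|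
      ≤ |B| + |(A + Gr - Fr) / Δx| := abs_sub _ _
    _ = |B| + |A + Gr - Fr| / Δx := by rw [abs_div, abs_of_pos hΔx]
    _ ≤ |B| + (|A| + |Gr| + |Fr|) / Δx := by
        gcongr
        calc |A + Gr - Fr| ≤ |A + Gr| + |Fr| := abs_sub _ _
          _ ≤ |A| + |Gr| + |Fr| := by linarith [abs_add_le A Gr]
    _ ≤ M * (Δx / 2) ^ 2 + (M * Δx ^ 3 / 2 + M * dp ^ 3 / 2 + M * dp ^ 3 / 2) / Δx := by gcongr
    _ ≤ M * (Δx / 2) ^ 2 + (M * Δx ^ 3 * (5 / 8)) / Δx := by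
        gcongr (?_ : ℝ) + ?_ / Δx
        · exact le_rfl
        · nlinarith [hdp3, hM0]
    _ = M * Δx ^ 2 * (7 / 8) := by field_simp; ring
    _ ≤ M * Δx ^ 2 := by nlinarith [hM0, sq_nonneg Δx]
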